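/- Let X ⊆ R^d be compact and f : X → R lower semicontinuous, and let f̃ be its convexification on conv(X). Then both f and f̃ attain their minima (on X and conv(X) respectively), and min_{x ∈ conv(X)} f̃(x) = min_{x ∈ X} f(x). -/

import Mathlib

def convexifySet (d : ℕ) (X : Set (EuclideanSpace ℝ (Fin d)))
    (f : EuclideanSpace ℝ (Fin d) → ℝ) (x : EuclideanSpace ℝ (Fin d)) : Set ℝ :=
  {r | ∃ (α : Fin (d + 1) → ℝ) (z : Fin (d + 1) → EuclideanSpace ℝ (Fin d)),
    (∀ k, 0 ≤ α k) ∧ (∑ k, α k = 1) ∧ (∀ k, z k ∈ X) ∧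
    (∑ k, α k • z k = x) ∧ r = ∑ k, α k * f (z k)}

noncomputable def convexify (d : ℕ) (X : Set (EuclideanSpace ℝ (Fin d)))
    (f : EuclideanSpace ℝ (Fin d) → ℝ) (x : EuclideanSpace ℝ (Fin d)) : ℝ :=
  sInf (convexifySet d X f x)

/-- Summing over `Fin n` a function vanishing off the range of an embedding. -/
lemma sum_ext_aux {M : Type*} [AddCommMonoid M] {ι : Type*} [Fintype ι] {n : ℕ}
    (e : ι ↪ Fin n) (F : Fin n → M) (h0 : ∀ k, (¬ ∃ a, e a = k) → F k = 0) :
    ∑ k, F k = ∑ a, F (e a) := by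
  classical
  rw [← Finset.sum_map Finset.univ e F]
  refine (Finset.sum_subset (Finset.subset_univ _) ?_).symm
  intro k _ hk
  refine h0 k ?_
  rintro ⟨a, rfl⟩
  exact hk (Finset.mem_map_of_mem e (Finset.mem_univ a))

/-- Extreme value theorem for lower semicontinuous functions on compact sets. -/
lemma lsc_exists_min_aux {d : ℕ} {X : Set (EuclideanSpace ℝ (Fin d))}
    (hX : IsCompact X) (hne : X.Nonempty) {f : EuclideanSpace ℝ (Fin d) → ℝ}
    (hf : LowerSemicontinuousOn f X) : ∃ x ∈ X, ∀ y ∈ X, f x ≤ f y := by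
  classical
  haveI : CompactSpace X := isCompact_iff_compactSpace.mp hX
  have hres : LowerSemicontinuous (X.restrict f) := by
    intro x y hy
    have h := hf x.1 x.2 y hy
    rw [← map_nhds_subtype_val x, Filter.eventually_map] at h
    exact h
  set t : X → Set (EuclideanSpace ℝ (Fin d)) :=
    fun y => Subtype.val '' (X.restrict f ⁻¹' Set.Iic (f ↑y)) with ht
  have htc : ∀ y, IsClosed (t y) := by
    intro y
    have hcl : IsClosed (X.restrict f ⁻¹' Set.Iic (f ↑y)) :=
      hres.isClosed_preimage (f ↑y)
    exact (hcl.isCompact.image continuous_subtype_val).isClosed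
  have hst : ∀ u : Finset X, (X ∩ ⋂ y ∈ u, t y).Nonempty := by
    intro u
    rcases u.eq_empty_or_nonempty with rfl | hu
    · simpa using hne
    · obtain ⟨y₀, hy₀u, hy₀⟩ := u.exists_min_image (fun y => f ↑y) hu
      refine ⟨↑y₀, y₀.2, ?_⟩
      simp only [Set.mem_iInter]
      intro y hy
      exact ⟨y₀, hy₀ y hy, rfl⟩
  obtain ⟨x, hxX, hx⟩ := hX.inter_iInter_nonempty t htc hst
  refine ⟨x, hxX, ?_⟩
  intro y hy
  have := Set.mem_iInter.mp hx ⟨y, hy⟩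
  obtain ⟨p, hp, hpx⟩ := this
  rw [← hpx]
  exact hp

/-- Carathéodory: every point of the convex hull gives a nonempty `convexifySet`. -/
lemma convexifySet_nonempty_aux (d : ℕ) (X : Set (EuclideanSpace ℝ (Fin d)))
    (hne : X.Nonempty) (f : EuclideanSpace ℝ (Fin d) → ℝ)
    {y : EuclideanSpace ℝ (Fin d)} (hy : y ∈ convexHull ℝ X) :
    (convexifySet d X f y).Nonempty := by
  classical
  obtain ⟨x₀, hx₀⟩ := hne
  obtain ⟨ι, hι, z, w, hrange, hindep, hpos, hsum, hcomb⟩ :=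
    eq_pos_convex_span_of_mem_convexHull hy
  letI := hι
  have hcard : Fintype.card ι ≤ d + 1 := by
    have h1 := hindep.card_le_finrank_succ
    have h2 : Module.finrank ℝ (vectorSpan ℝ (Set.range z)) ≤ d := by
      have := Submodule.finrank_le (vectorSpan ℝ (Set.range z))
      simpa [finrank_euclideanSpace_fin] using this
    omega
  have hcard' : Fintype.card ι ≤ Fintype.card (Fin (d + 1)) := by
    simpa using hcard
  obtain ⟨e⟩ := Function.Embedding.nonempty_of_card_le hcard'
  set α : Fin (d + 1) → ℝ := Function.extend e w (fun _ => (0:ℝ)) with hα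
  set zz : Fin (d + 1) → EuclideanSpace ℝ (Fin d) :=
    Function.extend e z (fun _ => x₀) with hzz
  have hα_on : ∀ a, α (e a) = w a := fun a => e.injective.extend_apply w _ a
  have hzz_on : ∀ a, zz (e a) = z a := fun a => e.injective.extend_apply z _ a
  have hα_off : ∀ k, (¬ ∃ a, e a = k) → α k = 0 := by
    intro k hk
    simpa using Function.extend_apply' w _ k hk
  refine ⟨∑ k, α k * f (zz k), α, zz, ?_, ?_, ?_, ?_, rfl⟩
  · intro k
    by_cases h : ∃ a, e a = k
    · obtain ⟨a, rfl⟩ := h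
      rw [hα_on a]
      exact (hpos a).le
    · rw [hα_off k h]
  · rw [sum_ext_aux e α hα_off]
    simp only [hα_on]
    exact hsum
  · intro k
    by_cases h : ∃ a, e a = k
    · obtain ⟨a, rfl⟩ := h
      rw [hzz_on a]
      exact hrange ⟨a, rfl⟩
    · have : zz k = x₀ := Function.extend_apply' z _ k h
      rw [this]
      exact hx₀
  · rw [sum_ext_aux e (fun k => α k • zz k) (by
      intro k hk
      simp [hα_off k hk])]
    simp only [hα_on, hzz_on]
    exact hcomb

/-- `f` and its convexification `f̃` attain their minima on `X` and `conv(X)`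
respectively, and the minima coincide. -/
theorem convexification_min_eq (d : ℕ) (X : Set (EuclideanSpace ℝ (Fin d)))
    (hX : IsCompact X) (hne : X.Nonempty) (f : EuclideanSpace ℝ (Fin d) → ℝ)
    (hf : LowerSemicontinuousOn f X) :
    (∃ x ∈ X, ∀ y ∈ X, f x ≤ f y) ∧
    (∃ x ∈ convexHull ℝ X, ∀ y ∈ convexHull ℝ X, convexify d X f x ≤ convexify d X f y) ∧
    sInf (convexify d X f '' convexHull ℝ X) = sInf (f '' X) := by
  classical
  obtain ⟨x₀, hx₀X, hmin⟩ := lsc_exists_min_aux hX hne hf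
  set m := f x₀ with hm
  -- every element of any convexifySet is ≥ m
  have hlb : ∀ y, ∀ r ∈ convexifySet d X f y, m ≤ r := by
    rintro y r ⟨α, z, hα0, hα1, hzX, -, rfl⟩
    calc m = ∑ k, α k * m := by rw [← Finset.sum_mul, hα1, one_mul]
    _ ≤ ∑ k, α k * f (z k) := by
        refine Finset.sum_le_sum fun k _ => ?_
        exact mul_le_mul_of_nonneg_left (hmin _ (hzX k)) (hα0 k)
  -- membership of f x₀ = m in convexifySet x₀
  have hmem : m ∈ convexifySet d X f x₀ := by
    refine ⟨fun k => if k = 0 then 1 else 0, fun _ => x₀, ?_, ?_, fun _ => hx₀X, ?_, ?_⟩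
    · intro k; dsimp only; split <;> norm_num
    · simp
    · rw [← Finset.sum_smul]
      simp
    · rw [← Finset.sum_mul]
      simp
      exact hm
  have hx₀hull : x₀ ∈ convexHull ℝ X := subset_convexHull ℝ X hx₀X
  -- convexify at x₀ equals m
  have hconvx₀ : convexify d X f x₀ = m := by
    refine le_antisymm (csInf_le ⟨m, hlb x₀⟩ hmem) (le_csInf ⟨m, hmem⟩ (hlb x₀))
  -- convexify at any y in hull is ≥ m
  have hconv_ge : ∀ y ∈ convexHull ℝ X, m ≤ convexify d X f y := fun y hy =>
    le_csInf (convexifySet_nonempty_aux d X hne f hy) (hlb y)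
  refine ⟨⟨x₀, hx₀X, hmin⟩, ⟨x₀, hx₀hull, fun y hy => ?_⟩, ?_⟩
  · rw [hconvx₀]; exact hconv_ge y hy
  · have h1 : sInf (f '' X) = m := by
      refine le_antisymm (csInf_le ⟨m, ?_⟩ ⟨x₀, hx₀X, rfl⟩) (le_csInf ⟨m, x₀, hx₀X, rfl⟩ ?_)
      · rintro r ⟨x, hx, rfl⟩; exact hmin x hx
      · rintro r ⟨x, hx, rfl⟩; exact hmin x hx
    have h2 : sInf (convexify d X f '' convexHull ℝ X) = m := by
      refine le_antisymm
        (csInf_le ⟨m, ?_⟩ ⟨x₀, hx₀hull, hconvx₀⟩)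
        (le_csInf ⟨m, x₀, hx₀hull, hconvx₀⟩ ?_)
      · rintro r ⟨y, hy, rfl⟩; exact hconv_ge y hy
      · rintro r ⟨y, hy, rfl⟩; exact hconv_ge y hy
    rw [h1, h2]
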